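/- Consider the Coxian distributed SEIR model with time-dependent contact rate: differentiable functions S, E_n, ..., E_1, I, R : [0,∞) → ℝ satisfying S' = μ − β(t)·S·I − μ·S, E_n' = β(t)·S·I − (λ_n+μ)·E_n, E_i' = p̄_i·λ_{i+1}·E_{i+1} − (λ_i+μ)·E_i for i = n−1,...,1, I' = Σ_{i=0}^{n−1} p_i·λ_{i+1}·E_{i+1} − (γ+μ)·I, and R' = γ·I − μ·R, where β : [0,∞) → ℝ is continuous and nonnegative. If S(0) > 0, E_i(0) > 0 for every i, I(0) > 0, and R(0) > 0, then S(t) > 0, E_i(t) > 0 for every i, I(t) > 0, and R(t) > 0 for all t > 0. -/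

import Mathlib

/-- If `f` solves an ODE on `[0, b]` with `f' t ≥ -(K * f t)` on `(0, b)` and
`f 0 > 0`, then `f b > 0` (barrier / Grönwall-type argument via
`t ↦ f t * exp (K t)` being monotone). -/
lemma pos_of_deriv_ge_linear (f f' : ℝ → ℝ) (K b : ℝ) (hb : 0 ≤ b)
    (hf : ∀ t ∈ Set.Icc (0:ℝ) b, HasDerivAt f (f' t) t)
    (hge : ∀ t ∈ Set.Ioo (0:ℝ) b, -(K * f t) ≤ f' t)
    (h0 : 0 < f 0) : 0 < f b := by
  rcases eq_or_lt_of_le hb with rfl | hb'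
  · exact h0
  set g : ℝ → ℝ := fun t => f t * Real.exp (K * t) with hgdef
  have hgd : ∀ t ∈ Set.Icc (0:ℝ) b,
      HasDerivAt g ((f' t + K * f t) * Real.exp (K * t)) t := by
    intro t ht
    have he : HasDerivAt (fun s : ℝ => Real.exp (K * s)) (K * Real.exp (K * t)) t := by
      have h1 : HasDerivAt (fun s : ℝ => K * s) K t := by
        simpa using (hasDerivAt_id t).const_mul K
      exact ((Real.hasDerivAt_exp (K * t)).comp t h1).congr_deriv (mul_comm _ _)
    have := (hf t ht).mul he
    exact this.congr_deriv (by ring)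
  have hmono : MonotoneOn g (Set.Icc 0 b) := by
    apply monotoneOn_of_hasDerivWithinAt_nonneg (convex_Icc 0 b)
    · intro t ht
      exact ((hgd t ht).continuousAt).continuousWithinAt
    · intro t ht
      rw [interior_Icc] at ht
      exact ((hgd t (Set.Ioo_subset_Icc_self ht)).hasDerivWithinAt)
    · intro t ht
      rw [interior_Icc] at ht
      have h1 : 0 ≤ f' t + K * f t := by
        have := hge t ht
        linarith
      exact mul_nonneg h1 (Real.exp_pos _).le
  have h1 : f 0 * Real.exp (K * 0) ≤ f b * Real.exp (K * b) :=
    hmono (Set.left_mem_Icc.2 hb) (Set.right_mem_Icc.2 hb) hb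
  rw [mul_zero, Real.exp_zero, mul_one] at h1
  have hgb : 0 < f b * Real.exp (K * b) := lt_of_lt_of_le h0 h1
  nlinarith [Real.exp_pos (K * b), hgb]

/-- Positivity preservation for the Coxian distributed SEIR model with
time-dependent contact rate: strictly positive initial data stay strictly
positive for all `t > 0`. -/
theorem coxian_seir_positivity
    (n : ℕ) (hn : 1 ≤ n) (μ γ : ℝ) (hμ : 0 < μ) (hγ : 0 < γ)
    (lam p : ℕ → ℝ) (hlam : ∀ i, 1 ≤ i → i ≤ n → 0 < lam i)
    (hp0 : p 0 = 1) (hp : ∀ i, 1 ≤ i → i ≤ n - 1 → 0 < p i ∧ p i < 1)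
    (β : ℝ → ℝ) (hβc : ContinuousOn β (Set.Ici 0)) (hβ : ∀ t, 0 ≤ t → 0 ≤ β t)
    (S I R : ℝ → ℝ) (E : ℕ → ℝ → ℝ)
    (hS : ∀ t, 0 ≤ t → HasDerivAt S (μ - β t * S t * I t - μ * S t) t)
    (hEn : ∀ t, 0 ≤ t → HasDerivAt (E n) (β t * S t * I t - (lam n + μ) * E n t) t)
    (hEi : ∀ i, 1 ≤ i → i ≤ n - 1 → ∀ t, 0 ≤ t →
      HasDerivAt (E i) ((1 - p i) * lam (i + 1) * E (i + 1) t - (lam i + μ) * E i t) t)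
    (hI : ∀ t, 0 ≤ t → HasDerivAt I
      ((∑ i ∈ Finset.range n, p i * lam (i + 1) * E (i + 1) t) - (γ + μ) * I t) t)
    (hR : ∀ t, 0 ≤ t → HasDerivAt R (γ * I t - μ * R t) t)
    (hS0 : 0 < S 0) (hE0 : ∀ i, 1 ≤ i → i ≤ n → 0 < E i 0)
    (hI0 : 0 < I 0) (hRinit : 0 < R 0) :
    ∀ t, 0 < t →
      0 < S t ∧ (∀ i, 1 ≤ i → i ≤ n → 0 < E i t) ∧ 0 < I t ∧ 0 < R t := by
  -- The positivity predicate
  set P : ℝ → Prop := fun t =>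
    0 < S t ∧ (∀ i, 1 ≤ i → i ≤ n → 0 < E i t) ∧ 0 < I t ∧ 0 < R t with hPdef
  have hP0 : P 0 := ⟨hS0, hE0, hI0, hRinit⟩
  -- continuity of all components on [0, ∞)
  have hScont : ∀ t : ℝ, 0 ≤ t → ContinuousAt S t := fun t ht => (hS t ht).continuousAt
  have hIcont : ∀ t : ℝ, 0 ≤ t → ContinuousAt I t := fun t ht => (hI t ht).continuousAt
  have hRcont : ∀ t : ℝ, 0 ≤ t → ContinuousAt R t := fun t ht => (hR t ht).continuousAt
  have hEcont : ∀ i, 1 ≤ i → i ≤ n → ∀ t : ℝ, 0 ≤ t → ContinuousAt (E i) t := by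
    intro i h1 h2 t ht
    rcases eq_or_lt_of_le h2 with rfl | hlt
    · exact (hEn t ht).continuousAt
    · exact (hEi i h1 (by omega) t ht).continuousAt
  -- positivity at a point propagates to a neighborhood
  have hnbhd : ∀ t : ℝ, 0 ≤ t → P t → ∀ᶠ s in nhds t, P s := by
    intro t ht hPt
    obtain ⟨hSt, hEt, hIt, hRt⟩ := hPt
    have e1 : ∀ᶠ s in nhds t, 0 < S s := (hScont t ht).eventually (eventually_gt_nhds hSt)
    have e2 : ∀ᶠ s in nhds t, 0 < I s := (hIcont t ht).eventually (eventually_gt_nhds hIt)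
    have e3 : ∀ᶠ s in nhds t, 0 < R s := (hRcont t ht).eventually (eventually_gt_nhds hRt)
    have e4 : ∀ᶠ s in nhds t, ∀ i ∈ Finset.Icc 1 n, 0 < E i s := by
      rw [Filter.eventually_all_finset]
      intro i hi
      rw [Finset.mem_Icc] at hi
      exact (hEcont i hi.1 hi.2 t ht).eventually
        (eventually_gt_nhds (hEt i hi.1 hi.2))
    filter_upwards [e1, e2, e3, e4] with s h1 h2 h3 h4
    refine ⟨h1, ?_, h2, h3⟩
    intro i hi1 hi2
    exact h4 i (Finset.mem_Icc.2 ⟨hi1, hi2⟩)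
  -- main claim: P holds on all of [0, ∞)
  have main : ∀ t : ℝ, 0 ≤ t → P t := by
    by_contra hcon
    push_neg at hcon
    obtain ⟨t1, ht1, hPt1⟩ := hcon
    set A : Set ℝ := {t | 0 ≤ t ∧ ¬ P t} with hAdef
    have hAne : A.Nonempty := ⟨t1, ht1, hPt1⟩
    have hAbdd : BddBelow A := ⟨0, fun a ha => ha.1⟩
    set t0 : ℝ := sInf A with ht0def
    have ht0nn : 0 ≤ t0 := le_csInf hAne fun a ha => ha.1
    -- everything positive before t0
    have hbefore : ∀ t : ℝ, 0 ≤ t → t < t0 → P t := by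
      intro t h1 h2
      by_contra hnp
      exact absurd (csInf_le hAbdd ⟨h1, hnp⟩) (not_le.2 h2)
    -- a bound on β * I on [0, t0]
    obtain ⟨tM, htM, hM⟩ : ∃ tM ∈ Set.Icc (0:ℝ) t0,
        IsMaxOn (fun s => β s * I s) (Set.Icc (0:ℝ) t0) tM := by
      apply IsCompact.exists_isMaxOn isCompact_Icc ⟨0, Set.left_mem_Icc.2 ht0nn⟩
      apply ContinuousOn.mul
      · exact hβc.mono (fun s hs => hs.1)
      · intro s hs
        exact (hIcont s hs.1).continuousWithinAt
    have hM : ∀ s ∈ Set.Icc (0:ℝ) t0, β s * I s ≤ β tM * I tM := fun s hs => hM hs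
    set M : ℝ := β tM * I tM with hMdef
    -- P holds at t0
    have hPt0 : P t0 := by
      have hIoo : ∀ t ∈ Set.Ioo (0:ℝ) t0, P t := fun t ht => hbefore t ht.1.le ht.2
      constructor
      · -- S
        apply pos_of_deriv_ge_linear S (fun t => μ - β t * S t * I t - μ * S t)
          (M + μ) t0 ht0nn (fun t ht => hS t ht.1) _ hS0
        intro t ht
        have hPt := hIoo t ht
        have hSt := hPt.1
        have hbi : β t * I t ≤ M := hM t ⟨ht.1.le, ht.2.le⟩
        nlinarith [mul_nonneg (sub_nonneg.2 hbi) hSt.le, hμ.le]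
      refine ⟨?_, ?_, ?_⟩
      · -- E i, downward induction from n
        intro i hi1 hi2
        -- prove by strong induction on n - i
        have key : ∀ k, ∀ i, 1 ≤ i → i ≤ n → n - i ≤ k → 0 < E i t0 := by
          intro k
          induction k with
          | zero =>
            intro i hi1 hi2 hk
            have hin : i = n := by omega
            rw [hin]
            apply pos_of_deriv_ge_linear (E n)
              (fun t => β t * S t * I t - (lam n + μ) * E n t)
              (lam n + μ) t0 ht0nn (fun t ht => hEn t ht.1) _ (hE0 n hn le_rfl)
            intro t ht
            have hPt := hIoo t ht
            have h1 : 0 ≤ β t * S t * I t :=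
              mul_nonneg (mul_nonneg (hβ t ht.1.le) hPt.1.le) hPt.2.2.1.le
            linarith
          | succ k ih =>
            intro i hi1 hi2 hk
            rcases eq_or_lt_of_le hi2 with rfl | hlt
            · exact ih i hi1 le_rfl (by omega)
            · have hile : i ≤ n - 1 := by omega
              have hps := hp i hi1 hile
              apply pos_of_deriv_ge_linear (E i)
                (fun t => (1 - p i) * lam (i + 1) * E (i + 1) t - (lam i + μ) * E i t)
                (lam i + μ) t0 ht0nn (fun t ht => hEi i hi1 hile t ht.1) _
                (hE0 i hi1 hi2)
              intro t ht
              have hPt := hIoo t ht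
              have hE1 : 0 < E (i + 1) t := hPt.2.1 (i+1) (by omega) (by omega)
              have h1 : 0 ≤ (1 - p i) * lam (i + 1) * E (i + 1) t := by
                apply mul_nonneg (mul_nonneg (by linarith [hps.2]) _) hE1.le
                exact (hlam (i+1) (by omega) (by omega)).le
              linarith
        exact key (n - i) i hi1 hi2 le_rfl
      · -- I
        apply pos_of_deriv_ge_linear I
          (fun t => (∑ i ∈ Finset.range n, p i * lam (i + 1) * E (i + 1) t) - (γ + μ) * I t)
          (γ + μ) t0 ht0nn (fun t ht => hI t ht.1) _ hI0
        intro t ht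
        have hPt := hIoo t ht
        have hsum : 0 ≤ ∑ i ∈ Finset.range n, p i * lam (i + 1) * E (i + 1) t := by
          apply Finset.sum_nonneg
          intro i hi
          rw [Finset.mem_range] at hi
          have hpi : 0 < p i := by
            rcases Nat.eq_zero_or_pos i with rfl | hipos
            · rw [hp0]; norm_num
            · exact (hp i hipos (by omega)).1
          have hli : 0 < lam (i + 1) := hlam (i+1) (by omega) (by omega)
          have hEi : 0 < E (i + 1) t := hPt.2.1 (i+1) (by omega) (by omega)
          positivity
        linarith
      · -- R
        apply pos_of_deriv_ge_linear R (fun t => γ * I t - μ * R t)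
          μ t0 ht0nn (fun t ht => hR t ht.1) _ hRinit
        intro t ht
        have hPt := hIoo t ht
        nlinarith [mul_pos hγ hPt.2.2.1]
    -- P holds in a neighborhood of t0, contradicting sInf
    have hev := hnbhd t0 ht0nn hPt0
    rw [Metric.eventually_nhds_iff] at hev
    obtain ⟨δ, hδ, hball⟩ := hev
    obtain ⟨a, haA, halt⟩ : ∃ a ∈ A, a < t0 + δ :=
      exists_lt_of_csInf_lt hAne (by linarith)
    have hat0 : t0 ≤ a := csInf_le hAbdd haA
    have : dist a t0 < δ := by
      rw [Real.dist_eq, abs_of_nonneg (by linarith)]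
      linarith
    exact haA.2 (hball this)
  intro t ht
  exact main t ht.le
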